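/- Let 𝒜 and ℬ be nonempty cross-intersecting families of r-element subsets of {1,...,n} with r ≤ n/2. Then |𝒜| + |ℬ| ≤ C(n,r) - C(n-r,r) + 1. -/

import Mathlib

open Finset Colex Nat
open scoped FinsetFamily

namespace HMX

open UV

/-- Explicit form of a singleton compression when it acts. -/
private lemma compress_eq_of {i j : ℕ} (hij : i ≠ j) {X : Finset ℕ} (hi : i ∉ X) (hj : j ∈ X) :
    UV.compress {i} {j} X = insert i (X.erase j) := by
  rw [UV.compress, if_pos ⟨disjoint_singleton_left.2 hi, singleton_subset_iff.2 hj⟩]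
  ext x
  simp only [sup_eq_union, mem_sdiff, mem_union, mem_singleton, mem_insert, mem_erase]
  constructor
  · rintro ⟨hx | rfl, hxj⟩
    exacts [Or.inr ⟨hxj, hx⟩, Or.inl rfl]
  · rintro (rfl | ⟨hxj, hx⟩)
    exacts [⟨Or.inr rfl, hij⟩, ⟨Or.inl hx, hxj⟩]

private lemma compress_eq_self {i j : ℕ} {X : Finset ℕ} (h : i ∈ X ∨ j ∉ X) :
    UV.compress {i} {j} X = X := by
  rw [UV.compress, if_neg]
  rintro ⟨h1, h2⟩
  rcases h with hi | hj
  · exact disjoint_singleton_left.1 h1 hi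
  · exact hj (singleton_subset_iff.1 h2)

/-- Compressions preserve the property of being a family of `r`-subsets of `range n`. -/
private lemma compression_subset {i j n r : ℕ} (hij : i < j) {𝒜 : Finset (Finset ℕ)}
    (h : 𝒜 ⊆ powersetCard r (range n)) : 𝓒 {i} {j} 𝒜 ⊆ powersetCard r (range n) := by
  intro A hA
  rcases mem_compression.1 hA with ⟨h1, -⟩ | ⟨-, a, ha, rfl⟩
  · exact h h1
  by_cases hia : i ∈ a
  · rw [compress_eq_self (Or.inl hia)]; exact h ha
  by_cases hja : j ∈ a
  · obtain ⟨hsub, hcard⟩ := mem_powersetCard.1 (h ha)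
    rw [compress_eq_of hij.ne hia hja, mem_powersetCard]
    constructor
    · intro x hx
      rcases mem_insert.1 hx with rfl | hx'
      · exact mem_range.2 (hij.trans (mem_range.1 (hsub hja)))
      · exact hsub (mem_of_mem_erase hx')
    · rw [card_insert_of_notMem (fun hx => hia (mem_of_mem_erase hx)),
        card_erase_of_mem hja, hcard]
      have : 1 ≤ r := by
        rw [← hcard]; exact card_pos.2 ⟨j, hja⟩
      omega
  · rw [compress_eq_self (Or.inr hja)]; exact h ha

/-- Compressions preserve cross-intersection. -/
private lemma cross_compression {i j : ℕ} (hij : i < j) {𝒜 ℬ : Finset (Finset ℕ)}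
    (hx : ∀ A ∈ 𝒜, ∀ B ∈ ℬ, (A ∩ B).Nonempty) :
    ∀ A ∈ 𝓒 {i} {j} 𝒜, ∀ B ∈ 𝓒 {i} {j} ℬ, (A ∩ B).Nonempty := by
  have key : ∀ (𝒜 ℬ : Finset (Finset ℕ)),
      (∀ A ∈ 𝒜, ∀ B ∈ ℬ, (A ∩ B).Nonempty) →
      ∀ A, (A ∈ 𝒜 ∧ UV.compress {i} {j} A ∈ 𝒜) →
      ∀ b ∈ ℬ, i ∉ b → j ∈ b → (A ∩ insert i (b.erase j)).Nonempty := by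
    intro 𝒜 ℬ hx A hA b hb hib hjb
    obtain ⟨x, hx'⟩ := hx A hA.1 b hb
    rw [mem_inter] at hx'
    by_cases hxj : x = j
    · subst hxj
      by_cases hiA : i ∈ A
      · exact ⟨i, mem_inter.2 ⟨hiA, mem_insert_self _ _⟩⟩
      · have hA2 := hA.2
        rw [compress_eq_of hij.ne hiA hx'.1] at hA2
        obtain ⟨y, hy⟩ := hx _ hA2 b hb
        rw [mem_inter, mem_insert] at hy
        rcases hy.1 with rfl | hy'
        · exact absurd hy.2 hib
        · exact ⟨y, mem_inter.2 ⟨mem_of_mem_erase hy',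
            mem_insert_of_mem (mem_erase.2 ⟨(mem_erase.1 hy').1, hy.2⟩)⟩⟩
    · exact ⟨x, mem_inter.2 ⟨hx'.1, mem_insert_of_mem (mem_erase.2 ⟨hxj, hx'.2⟩)⟩⟩
  intro A hA B hB
  rcases mem_compression.1 hA with hA' | ⟨hA1, a, ha, rfl⟩ <;>
    rcases mem_compression.1 hB with hB' | ⟨hB1, b, hb, rfl⟩
  · exact hx A hA'.1 B hB'.1
  · -- A old, B = compress b new
    have hne : UV.compress {i} {j} b ≠ b := fun h => hB1 (by rw [h]; exact hb)
    have hib : i ∉ b := fun h => hne (compress_eq_self (Or.inl h))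
    have hjb : j ∈ b := by
      by_contra h
      exact hne (compress_eq_self (Or.inr h))
    rw [compress_eq_of hij.ne hib hjb]
    exact key 𝒜 ℬ hx A hA' b hb hib hjb
  · -- B old, A = compress a new
    have hne : UV.compress {i} {j} a ≠ a := fun h => hA1 (by rw [h]; exact ha)
    have hia : i ∉ a := fun h => hne (compress_eq_self (Or.inl h))
    have hja : j ∈ a := by
      by_contra h
      exact hne (compress_eq_self (Or.inr h))
    rw [compress_eq_of hij.ne hia hja]
    have := key ℬ 𝒜 (fun B hB A hA => by
      obtain ⟨x, hx'⟩ := hx A hA B hB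
      exact ⟨x, by rw [mem_inter] at hx' ⊢; exact ⟨hx'.2, hx'.1⟩⟩) B hB' a ha hia hja
    obtain ⟨x, hx'⟩ := this
    rw [mem_inter] at hx'
    exact ⟨x, mem_inter.2 ⟨hx'.2, hx'.1⟩⟩
  · -- both new
    have hneA : UV.compress {i} {j} a ≠ a := fun h => hA1 (by rw [h]; exact ha)
    have hia : i ∉ a := fun h => hneA (compress_eq_self (Or.inl h))
    have hja : j ∈ a := by
      by_contra h
      exact hneA (compress_eq_self (Or.inr h))
    have hneB : UV.compress {i} {j} b ≠ b := fun h => hB1 (by rw [h]; exact hb)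
    have hib : i ∉ b := fun h => hneB (compress_eq_self (Or.inl h))
    have hjb : j ∈ b := by
      by_contra h
      exact hneB (compress_eq_self (Or.inr h))
    rw [compress_eq_of hij.ne hia hja, compress_eq_of hij.ne hib hjb]
    exact ⟨i, mem_inter.2 ⟨mem_insert_self _ _, mem_insert_self _ _⟩⟩

/-- The colex measure of a family. -/
private def fam (𝒜 : Finset (Finset ℕ)) : ℕ := ∑ A ∈ 𝒜, ∑ x ∈ A, 2 ^ x

private lemma fam_compression_lt {i j : ℕ} (hij : i < j) {𝒜 : Finset (Finset ℕ)}
    (h : 𝓒 {i} {j} 𝒜 ≠ 𝒜) : fam (𝓒 {i} {j} 𝒜) < fam 𝒜 := by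
  rw [compression] at h ⊢
  have q : ∀ Q ∈ {A ∈ 𝒜 | UV.compress {i} {j} A ∉ 𝒜}, UV.compress {i} {j} Q ≠ Q := by
    simp_rw [mem_filter]
    intro Q hQ hQ'
    rw [hQ'] at hQ
    exact hQ.2 hQ.1
  have uA : {A ∈ 𝒜 | UV.compress {i} {j} A ∈ 𝒜} ∪ {A ∈ 𝒜 | UV.compress {i} {j} A ∉ 𝒜} = 𝒜 :=
    filter_union_filter_not_eq _ _
  have ne₂ : {A ∈ 𝒜 | UV.compress {i} {j} A ∉ 𝒜}.Nonempty := by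
    refine nonempty_iff_ne_empty.2 fun z ↦ h ?_
    rw [filter_image, z, image_empty, union_empty]
    rwa [z, union_empty] at uA
  rw [fam, fam, sum_union compress_disjoint]
  conv_rhs => rw [← uA]
  rw [sum_union (disjoint_filter_filter_not _ _ _), add_lt_add_iff_left, filter_image,
    sum_image compress_injOn]
  refine sum_lt_sum_of_nonempty ne₂ fun A hA ↦ ?_
  rw [geomSum_lt_geomSum_iff_toColex_lt_toColex le_rfl]
  exact toColex_compress_lt_toColex (hU := singleton_nonempty i) (hV := singleton_nonempty j) (by simpa using hij) (q _ hA)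

/-- From any cross-intersecting pair we can get a fully shifted cross-intersecting pair. -/
private lemma exists_shifted (n r : ℕ) (𝒜 ℬ : Finset (Finset ℕ))
    (h𝒜 : 𝒜 ⊆ powersetCard r (range n)) (hℬ : ℬ ⊆ powersetCard r (range n))
    (hx : ∀ A ∈ 𝒜, ∀ B ∈ ℬ, (A ∩ B).Nonempty) :
    ∃ 𝒜' ℬ' : Finset (Finset ℕ), 𝒜' ⊆ powersetCard r (range n) ∧
      ℬ' ⊆ powersetCard r (range n) ∧ #𝒜' = #𝒜 ∧ #ℬ' = #ℬ ∧
      (∀ A ∈ 𝒜', ∀ B ∈ ℬ', (A ∩ B).Nonempty) ∧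
      ∀ i j : ℕ, i < j → IsCompressed {i} {j} 𝒜' ∧ IsCompressed {i} {j} ℬ' := by
  by_cases H : ∀ i j : ℕ, i < j → IsCompressed {i} {j} 𝒜 ∧ IsCompressed {i} {j} ℬ
  · exact ⟨𝒜, ℬ, h𝒜, hℬ, rfl, rfl, hx, H⟩
  · push_neg at H
    obtain ⟨i, j, hij, hnc⟩ := H
    obtain ⟨𝒜', ℬ', p1, p2, p3, p4, p5, p6⟩ :=
      exists_shifted n r (𝓒 {i} {j} 𝒜) (𝓒 {i} {j} ℬ)
        (compression_subset hij h𝒜) (compression_subset hij hℬ)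
        (cross_compression hij hx)
    exact ⟨𝒜', ℬ', p1, p2, p3.trans (card_compression _ _ _),
      p4.trans (card_compression _ _ _), p5, p6⟩
termination_by fam 𝒜 + fam ℬ
decreasing_by
  have h1 : fam (𝓒 {i} {j} 𝒜) ≤ fam 𝒜 := by
    by_cases hc : 𝓒 {i} {j} 𝒜 = 𝒜
    · rw [hc]
    · exact (fam_compression_lt hij hc).le
  have h2 : fam (𝓒 {i} {j} ℬ) ≤ fam ℬ := by
    by_cases hc : 𝓒 {i} {j} ℬ = ℬ
    · rw [hc]
    · exact (fam_compression_lt hij hc).le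
  by_cases hc : IsCompressed {i} {j} 𝒜
  · exact Nat.add_lt_add_of_le_of_lt h1 (fam_compression_lt hij (hnc hc))
  · exact Nat.add_lt_add_of_lt_of_le (fam_compression_lt hij hc) h2

/-- Facts about splitting a shifted family along the top element `e` of `range (e+1)`. -/
private lemma split_facts {e r : ℕ} (hr1 : 1 ≤ r) (hrn : 2 * r < e + 1) {𝒜 : Finset (Finset ℕ)}
    (h𝒜 : 𝒜 ⊆ powersetCard r (range (e + 1)))
    (hsh : ∀ i j : ℕ, i < j → IsCompressed {i} {j} 𝒜)
    (hne : 𝒜.Nonempty) :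
    {A ∈ 𝒜 | e ∉ A} ⊆ powersetCard r (range e) ∧
    ({A ∈ 𝒜 | e ∈ A}).image (fun A => A.erase e) ⊆ powersetCard (r - 1) (range e) ∧
    #𝒜 = #{A ∈ 𝒜 | e ∉ A} + #(({A ∈ 𝒜 | e ∈ A}).image (fun A => A.erase e)) ∧
    {A ∈ 𝒜 | e ∉ A}.Nonempty := by
  have hsub : ∀ A ∈ 𝒜, A ⊆ range (e + 1) ∧ #A = r := fun A hA => mem_powersetCard.1 (h𝒜 hA)
  refine ⟨?_, ?_, ?_, ?_⟩
  · intro A hA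
    rw [mem_filter] at hA
    rw [mem_powersetCard]
    refine ⟨fun x hx => mem_range.2 ?_, (hsub _ hA.1).2⟩
    have hxn := mem_range.1 ((hsub _ hA.1).1 hx)
    have hxe : x ≠ e := fun h => hA.2 (h ▸ hx)
    omega
  · intro D hD
    rw [mem_image] at hD
    obtain ⟨A, hA, rfl⟩ := hD
    rw [mem_filter] at hA
    rw [mem_powersetCard]
    constructor
    · intro x hx
      rw [mem_erase] at hx
      have h1 := mem_range.1 ((hsub _ hA.1).1 hx.2)
      have h2 := hx.1
      rw [mem_range]
      omega
    · rw [card_erase_of_mem hA.2, (hsub _ hA.1).2]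
  · have h1 := card_filter_add_card_filter_not (s := 𝒜) (p := fun A => e ∈ A)
    have h2 : #(({A ∈ 𝒜 | e ∈ A}).image (fun A => A.erase e)) = #{A ∈ 𝒜 | e ∈ A} := by
      apply Finset.card_image_of_injOn
      intro A hA A' hA' hEq
      rw [mem_coe, mem_filter] at hA hA'
      simp only at hEq
      rw [← insert_erase hA.2, ← insert_erase hA'.2, hEq]
    omega
  · obtain ⟨A, hA⟩ := hne
    by_cases he : e ∈ A
    · have hcard := (hsub _ hA).2
      have hex : (range e \ A).Nonempty := by
        rw [← Finset.card_pos]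
        have h3 := le_card_sdiff A (range e)
        rw [card_range] at h3
        omega
      obtain ⟨i, hi⟩ := hex
      rw [mem_sdiff, mem_range] at hi
      have hmem : UV.compress {i} {e} A ∈ 𝓒 {i} {e} 𝒜 := compress_mem_compression hA
      rw [(hsh i e hi.1).eq] at hmem
      rw [compress_eq_of (by omega) hi.2 he] at hmem
      refine ⟨insert i (A.erase e), mem_filter.2 ⟨hmem, ?_⟩⟩
      rw [mem_insert]
      push_neg
      exact ⟨by omega, fun h => (mem_erase.1 h).1 rfl⟩
    · exact ⟨A, mem_filter.2 ⟨hA, he⟩⟩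

private lemma HM_nat : ∀ n : ℕ, ∀ r : ℕ, 2 * r ≤ n → ∀ 𝒜 ℬ : Finset (Finset ℕ),
    𝒜 ⊆ powersetCard r (range n) → ℬ ⊆ powersetCard r (range n) →
    𝒜.Nonempty → ℬ.Nonempty → (∀ A ∈ 𝒜, ∀ B ∈ ℬ, (A ∩ B).Nonempty) →
    #𝒜 + #ℬ ≤ n.choose r - (n - r).choose r + 1 := by
  intro n
  induction n using Nat.strong_induction_on with
  | _ n IH =>
  intro r hr 𝒜 ℬ h𝒜 hℬ h𝒜ne hℬne hx
  rcases Nat.eq_zero_or_pos r with rfl | hr1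
  · obtain ⟨A₀, hA₀⟩ := h𝒜ne
    obtain ⟨B₀, hB₀⟩ := hℬne
    have hA0 : A₀ = ∅ := card_eq_zero.1 (mem_powersetCard.1 (h𝒜 hA₀)).2
    obtain ⟨x, hx'⟩ := hx A₀ hA₀ B₀ hB₀
    rw [hA0] at hx'
    simp at hx'
  rcases eq_or_lt_of_le hr with heq | hlt
  · -- base case `n = 2r` : complementation
    have hkey : #𝒜 + #ℬ ≤ n.choose r := by
      have hinj : Set.InjOn (fun A => range n \ A) 𝒜 := by
        intro A hA A' hA' h
        have h1 := (mem_powersetCard.1 (h𝒜 hA)).1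
        have h2 := (mem_powersetCard.1 (h𝒜 hA')).1
        rw [← Finset.sdiff_sdiff_eq_self h1, ← Finset.sdiff_sdiff_eq_self h2]
        simp only at h
        rw [h]
      have hdisj : Disjoint (𝒜.image (fun A => range n \ A)) ℬ := by
        rw [disjoint_left]
        rintro X hX hXB
        rw [mem_image] at hX
        obtain ⟨A, hA, rfl⟩ := hX
        obtain ⟨x, hxm⟩ := hx A hA _ hXB
        rw [mem_inter, mem_sdiff] at hxm
        exact hxm.2.2 hxm.1
      have hsubU : 𝒜.image (fun A => range n \ A) ∪ ℬ ⊆ powersetCard r (range n) := by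
        apply union_subset _ hℬ
        intro X hX
        rw [mem_image] at hX
        obtain ⟨A, hA, rfl⟩ := hX
        obtain ⟨hsubA, hcardA⟩ := mem_powersetCard.1 (h𝒜 hA)
        rw [mem_powersetCard]
        refine ⟨sdiff_subset, ?_⟩
        rw [card_sdiff_of_subset hsubA, card_range, hcardA]
        omega
      calc #𝒜 + #ℬ = #(𝒜.image (fun A => range n \ A)) + #ℬ := by
            rw [Finset.card_image_of_injOn hinj]
        _ = #(𝒜.image (fun A => range n \ A) ∪ ℬ) := (card_union_of_disjoint hdisj).symm
        _ ≤ #(powersetCard r (range n)) := card_le_card hsubU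
        _ = n.choose r := by rw [card_powersetCard, card_range]
    have h1 : (n - r).choose r = 1 := by
      rw [show n - r = r by omega, Nat.choose_self]
    omega
  · -- main case `2r < n`
    obtain ⟨R, rfl⟩ : ∃ R, r = R + 1 := ⟨r - 1, by omega⟩
    obtain ⟨N, rfl⟩ : ∃ N, n = N + 1 := ⟨n - 1, by omega⟩
    obtain ⟨𝒜', ℬ', hs𝒜, hsℬ, hc𝒜, hcℬ, hx', hsh⟩ := exists_shifted (N + 1) (R + 1) 𝒜 ℬ h𝒜 hℬ hx
    have h𝒜ne' : 𝒜'.Nonempty := Finset.card_pos.1 (by rw [hc𝒜]; exact Finset.card_pos.2 h𝒜ne)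
    have hℬne' : ℬ'.Nonempty := Finset.card_pos.1 (by rw [hcℬ]; exact Finset.card_pos.2 hℬne)
    obtain ⟨sub𝒜₀, sub𝒜₁, cardsplit𝒜, ne𝒜₀⟩ :=
      split_facts (by omega) hlt hs𝒜 (fun i j h => (hsh i j h).1) h𝒜ne'
    obtain ⟨subℬ₀, subℬ₁, cardsplitℬ, neℬ₀⟩ :=
      split_facts (by omega) hlt hsℬ (fun i j h => (hsh i j h).2) hℬne'
    set 𝒜₀ := {A ∈ 𝒜' | N ∉ A} with h𝒜₀def
    set ℬ₀ := {A ∈ ℬ' | N ∉ A} with hℬ₀def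
    set 𝒜₁ := ({A ∈ 𝒜' | N ∈ A}).image (fun A => A.erase N) with h𝒜₁def
    set ℬ₁ := ({A ∈ ℬ' | N ∈ A}).image (fun A => A.erase N) with hℬ₁def
    simp only [Nat.add_sub_cancel] at sub𝒜₁ subℬ₁
    -- cross-intersection facts
    have cross₀₀ : ∀ A ∈ 𝒜₀, ∀ B ∈ ℬ₀, (A ∩ B).Nonempty :=
      fun A hA B hB => hx' A (mem_filter.1 hA).1 B (mem_filter.1 hB).1
    have cross₁₀ : ∀ D ∈ 𝒜₁, ∀ B ∈ ℬ₀, (D ∩ B).Nonempty := by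
      intro D hD B hB
      rw [h𝒜₁def, mem_image] at hD
      obtain ⟨A, hA, rfl⟩ := hD
      rw [mem_filter] at hA
      obtain ⟨x, hxm⟩ := hx' A hA.1 B (mem_filter.1 hB).1
      rw [mem_inter] at hxm
      refine ⟨x, mem_inter.2 ⟨mem_erase.2 ⟨?_, hxm.1⟩, hxm.2⟩⟩
      rintro rfl
      exact (mem_filter.1 hB).2 hxm.2
    have cross₀₁ : ∀ D ∈ ℬ₁, ∀ A ∈ 𝒜₀, (D ∩ A).Nonempty := by
      intro D hD A hA
      rw [hℬ₁def, mem_image] at hD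
      obtain ⟨B, hB, rfl⟩ := hD
      rw [mem_filter] at hB
      obtain ⟨x, hxm⟩ := hx' A (mem_filter.1 hA).1 B hB.1
      rw [mem_inter] at hxm
      refine ⟨x, mem_inter.2 ⟨mem_erase.2 ⟨?_, hxm.2⟩, hxm.1⟩⟩
      rintro rfl
      exact (mem_filter.1 hA).2 hxm.1
    have cross₁₁ : ∀ D ∈ 𝒜₁, ∀ E ∈ ℬ₁, (D ∩ E).Nonempty := by
      intro D hD E hE
      rw [h𝒜₁def, mem_image] at hD
      rw [hℬ₁def, mem_image] at hE
      obtain ⟨A, hA, rfl⟩ := hD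
      obtain ⟨B, hB, rfl⟩ := hE
      rw [mem_filter] at hA hB
      by_contra hcon
      rw [not_nonempty_iff_eq_empty] at hcon
      have c1 : #(A.erase N) = R := by
        rw [card_erase_of_mem hA.2, (mem_powersetCard.1 (hs𝒜 hA.1)).2]
        omega
      have c2 : #(B.erase N) = R := by
        rw [card_erase_of_mem hB.2, (mem_powersetCard.1 (hsℬ hB.1)).2]
        omega
      have hcards : #(A.erase N ∪ B.erase N) ≤ 2 * R := by
        have := card_union_le (A.erase N) (B.erase N)
        omega
      have hex : (range N \ (A.erase N ∪ B.erase N)).Nonempty := by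
        rw [← Finset.card_pos]
        have h3 := le_card_sdiff (A.erase N ∪ B.erase N) (range N)
        rw [card_range] at h3
        omega
      obtain ⟨jj, hjj⟩ := hex
      rw [mem_sdiff, mem_union, mem_range] at hjj
      have hjA : jj ∉ A := fun h => hjj.2 (Or.inl (mem_erase.2 ⟨by omega, h⟩))
      have hmem : insert jj (A.erase N) ∈ 𝒜' := by
        have h5 : UV.compress {jj} {N} A ∈ 𝓒 {jj} {N} 𝒜' := compress_mem_compression hA.1
        rw [(hsh jj N hjj.1).1.eq] at h5
        rwa [compress_eq_of (by omega) hjA hA.2] at h5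
      obtain ⟨x, hxm⟩ := hx' _ hmem B hB.1
      rw [mem_inter, mem_insert] at hxm
      have hxB := hxm.2
      rcases hxm.1 with rfl | hxA
      · exact hjj.2 (Or.inr (mem_erase.2 ⟨by omega, hxB⟩))
      · have hfin : x ∈ A.erase N ∩ B.erase N :=
          mem_inter.2 ⟨hxA, mem_erase.2 ⟨(mem_erase.1 hxA).1, hxB⟩⟩
        rw [hcon] at hfin
        exact notMem_empty x hfin
    -- counting bound for a top-slice against a bottom-slice witness
    have count_bound : ∀ (𝒳 : Finset (Finset ℕ)) (B₀ : Finset ℕ),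
        𝒳 ⊆ powersetCard R (range N) → B₀ ⊆ range N → #B₀ = R + 1 →
        (∀ D ∈ 𝒳, (D ∩ B₀).Nonempty) →
        #𝒳 + (N - (R + 1)).choose R ≤ N.choose R := by
      intro 𝒳 B₀ h𝒳 hB₀s hB₀c hcr
      have hdisj : Disjoint 𝒳 (powersetCard R (range N \ B₀)) := by
        rw [disjoint_left]
        intro D hD hD'
        obtain ⟨x, hxm⟩ := hcr D hD
        rw [mem_inter] at hxm
        have h6 := (mem_powersetCard.1 hD').1 hxm.1
        rw [mem_sdiff] at h6
        exact h6.2 hxm.2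
      have hsubU : 𝒳 ∪ powersetCard R (range N \ B₀) ⊆ powersetCard R (range N) := by
        apply union_subset h𝒳
        intro D hD
        rw [mem_powersetCard] at hD ⊢
        exact ⟨hD.1.trans sdiff_subset, hD.2⟩
      have h6 := card_le_card hsubU
      rw [card_union_of_disjoint hdisj, card_powersetCard, card_powersetCard,
        card_sdiff_of_subset hB₀s, card_range, hB₀c] at h6
      exact h6
    -- arithmetic facts
    have P1 : (N + 1).choose (R + 1) = N.choose R + N.choose (R + 1) :=
      Nat.choose_succ_succ _ _
    have e0 : (N + 1 - (R + 1)).choose (R + 1) = (N - R).choose (R + 1) := by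
      rw [show N + 1 - (R + 1) = N - R from by omega]
    have P2 : (N - R).choose (R + 1) = (N - (R + 1)).choose R + (N - (R + 1)).choose (R + 1) := by
      rw [show N - R = (N - (R + 1)) + 1 from by omega]
      exact Nat.choose_succ_succ _ _
    have m1 : (N - (R + 1)).choose (R + 1) ≤ N.choose (R + 1) :=
      Nat.choose_le_choose _ (by omega)
    have m2 : (N - (R + 1)).choose R ≤ N.choose R := Nat.choose_le_choose _ (by omega)
    have m4 : (N - R).choose (R + 1) ≤ (N + 1).choose (R + 1) :=
      Nat.choose_le_choose _ (by omega)
    have hIH0 := IH N (by omega) (R + 1) (by omega) 𝒜₀ ℬ₀ sub𝒜₀ subℬ₀ ne𝒜₀ neℬ₀ cross₀₀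
    have t1 : #𝒜 = #𝒜₀ + #𝒜₁ := by rw [← hc𝒜]; exact cardsplit𝒜
    have t2 : #ℬ = #ℬ₀ + #ℬ₁ := by rw [← hcℬ]; exact cardsplitℬ
    rcases eq_empty_or_nonempty 𝒜₁ with hA1 | hA1
    · -- 𝒜₁ empty : count ℬ₁ against a member of 𝒜₀
      obtain ⟨A₀, hA₀⟩ := ne𝒜₀
      have hA₀m := mem_powersetCard.1 (sub𝒜₀ hA₀)
      have hcount := count_bound ℬ₁ A₀ subℬ₁ hA₀m.1 hA₀m.2 (fun D hD => cross₀₁ D hD A₀ hA₀)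
      have ha1 : #𝒜₁ = 0 := by rw [hA1]; exact card_empty
      omega
    rcases eq_empty_or_nonempty ℬ₁ with hB1 | hB1
    · -- ℬ₁ empty : count 𝒜₁ against a member of ℬ₀
      obtain ⟨B₀, hB₀⟩ := neℬ₀
      have hB₀m := mem_powersetCard.1 (subℬ₀ hB₀)
      have hcount := count_bound 𝒜₁ B₀ sub𝒜₁ hB₀m.1 hB₀m.2 (fun D hD => cross₁₀ D hD B₀ hB₀)
      have hb1 : #ℬ₁ = 0 := by rw [hB1]; exact card_empty
      omega
    · -- both nonempty : use the induction hypothesis at level `r - 1`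
      rcases Nat.eq_zero_or_pos R with rfl | hR1
      · obtain ⟨D, hD⟩ := hA1
        obtain ⟨E, hE⟩ := hB1
        have hDe : D = ∅ := card_eq_zero.1 (mem_powersetCard.1 (sub𝒜₁ hD)).2
        obtain ⟨x, hxm⟩ := cross₁₁ D hD E hE
        rw [hDe] at hxm
        simp at hxm
      · have hIH1 := IH N (by omega) R (by omega) 𝒜₁ ℬ₁ sub𝒜₁ subℬ₁ hA1 hB1 cross₁₁
        obtain ⟨RR, rfl⟩ : ∃ RR, R = RR + 1 := ⟨R - 1, by omega⟩
        have P3 : (N - (RR + 1)).choose (RR + 1)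
            = (N - (RR + 1 + 1)).choose RR + (N - (RR + 1 + 1)).choose (RR + 1) := by
          rw [show N - (RR + 1) = (N - (RR + 1 + 1)) + 1 from by omega]
          exact Nat.choose_succ_succ _ _
        have pos1 : 1 ≤ (N - (RR + 1 + 1)).choose RR := Nat.choose_pos (by omega)
        have m3 : (N - (RR + 1)).choose (RR + 1) ≤ N.choose (RR + 1) :=
          Nat.choose_le_choose _ (by omega)
        omega

theorem hilton_milner_cross_aux (n r : ℕ) (hr : 2 * r ≤ n)
    (𝒜 ℬ : Finset (Finset (Fin n)))
    (h𝒜ne : 𝒜.Nonempty) (hℬne : ℬ.Nonempty)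
    (h𝒜card : ∀ A ∈ 𝒜, A.card = r) (hℬcard : ∀ B ∈ ℬ, B.card = r)
    (hcross : ∀ A ∈ 𝒜, ∀ B ∈ ℬ, (A ∩ B).Nonempty) :
    𝒜.card + ℬ.card ≤ n.choose r - (n - r).choose r + 1 := by
  classical
  let f : Fin n ↪ ℕ := ⟨Fin.val, Fin.val_injective⟩
  let F : Finset (Fin n) → Finset ℕ := fun A => A.map f
  have hFinj : Function.Injective F := fun A B h => Finset.map_injective f h
  have hmap : ∀ (𝒳 : Finset (Finset (Fin n))), (∀ A ∈ 𝒳, A.card = r) →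
      𝒳.image F ⊆ powersetCard r (range n) := by
    intro 𝒳 hc X hX
    rw [mem_image] at hX
    obtain ⟨A, hA, rfl⟩ := hX
    rw [mem_powersetCard]
    constructor
    · intro x hxm
      rw [mem_map] at hxm
      obtain ⟨a, _, rfl⟩ := hxm
      exact mem_range.2 a.isLt
    · rw [card_map]
      exact hc A hA
  have key := HM_nat n r hr (𝒜.image F) (ℬ.image F) (hmap 𝒜 h𝒜card) (hmap ℬ hℬcard)
    (h𝒜ne.image F) (hℬne.image F) ?_
  · rwa [card_image_of_injective _ hFinj, card_image_of_injective _ hFinj] at key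
  · intro X hX Y hY
    rw [mem_image] at hX hY
    obtain ⟨A, hA, rfl⟩ := hX
    obtain ⟨B, hB, rfl⟩ := hY
    obtain ⟨x, hxm⟩ := hcross A hA B hB
    rw [mem_inter] at hxm
    exact ⟨f x, mem_inter.2 ⟨mem_map_of_mem f hxm.1, mem_map_of_mem f hxm.2⟩⟩

end HMX

/-- **Hilton–Milner cross-intersecting theorem (uniform case).** If `𝒜, ℬ`
are nonempty cross-intersecting families of `r`-element subsets of an
`n`-element set with `r ≤ n/2`, then `|𝒜| + |ℬ| ≤ C(n,r) - C(n-r,r) + 1`. -/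
theorem hilton_milner_cross (n r : ℕ) (hr : 2 * r ≤ n)
    (𝒜 ℬ : Finset (Finset (Fin n)))
    (h𝒜ne : 𝒜.Nonempty) (hℬne : ℬ.Nonempty)
    (h𝒜card : ∀ A ∈ 𝒜, A.card = r) (hℬcard : ∀ B ∈ ℬ, B.card = r)
    (hcross : ∀ A ∈ 𝒜, ∀ B ∈ ℬ, (A ∩ B).Nonempty) :
    𝒜.card + ℬ.card ≤ n.choose r - (n - r).choose r + 1 :=
  HMX.hilton_milner_cross_aux n r hr 𝒜 ℬ h𝒜ne hℬne h𝒜card hℬcard hcross
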